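/- arXiv:1007.1101 — 2 statements merged into one kernel-verified Lean document; each statement's English description precedes it below -/
import Mathlib

section
/- For every real β>1 there exists a unique m∈(0,1) with m=tanh(β·m); moreover for 0<β≤1 the only solution of m=tanh(β·m) in [0,1] is m=0. -/
open Real Set Filter Topology

private lemma tanh_hasDerivAt (x : ℝ) :
    HasDerivAt Real.tanh (1 / Real.cosh x ^ 2) x := by
  have h := (Real.hasDerivAt_sinh x).div (Real.hasDerivAt_cosh x) (Real.cosh_pos x).ne'
  have e : Real.cosh x * Real.cosh x - Real.sinh x * Real.sinh x = 1 := by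
    nlinarith [Real.cosh_sq_sub_sinh_sq x]
  rw [e] at h
  have hfun : (Real.sinh / Real.cosh) = Real.tanh :=
    funext fun y => (Real.tanh_eq_sinh_div_cosh y).symm
  rwa [hfun] at h

private lemma tanh_continuous' : Continuous Real.tanh :=
  (Differentiable.continuous fun x => (tanh_hasDerivAt x).differentiableAt)

private lemma tanh_lt_one' (x : ℝ) : Real.tanh x < 1 := by
  rw [Real.tanh_eq_sinh_div_cosh, div_lt_one (Real.cosh_pos x)]
  exact Real.sinh_lt_cosh x

private lemma tanh_lt_self' {x : ℝ} (hx : 0 < x) : Real.tanh x < x := by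
  have hmono : StrictMonoOn (fun y => y - Real.tanh y) (Ici 0) := by
    apply strictMonoOn_of_deriv_pos (convex_Ici 0)
    · exact (continuous_id.sub tanh_continuous').continuousOn
    · intro y hy
      rw [interior_Ici, mem_Ioi] at hy
      have hd : HasDerivAt (fun y => y - Real.tanh y) (1 - 1 / Real.cosh y ^ 2) y :=
        (hasDerivAt_id y).sub (tanh_hasDerivAt y)
      rw [hd.deriv]
      have h1 : 1 < Real.cosh y := Real.one_lt_cosh.2 hy.ne'
      have h2 : 1 / Real.cosh y ^ 2 < 1 := by
        rw [div_lt_one (by positivity)]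
        nlinarith
      linarith
  have := hmono (self_mem_Ici) (le_of_lt hx : x ∈ Ici 0) hx
  simp only [Real.tanh_zero, sub_zero] at this
  linarith

/-- **Mean-field equation.** For every real `β > 1` there exists a unique `m ∈ (0,1)` with
`m = tanh (β * m)`; moreover for `0 < β ≤ 1` the only solution of `m = tanh (β * m)`
in `[0,1]` is `m = 0`. -/
theorem mean_field_equation :
    (∀ β : ℝ, 1 < β → ∃! m : ℝ, m ∈ Set.Ioo (0 : ℝ) 1 ∧ m = Real.tanh (β * m)) ∧
    (∀ β : ℝ, 0 < β → β ≤ 1 →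
      ∀ m : ℝ, m ∈ Set.Icc (0 : ℝ) 1 → m = Real.tanh (β * m) → m = 0) := by
  constructor
  · intro β hβ
    have hβ0 : 0 < β := lt_trans one_pos hβ
    set F : ℝ → ℝ := fun m => Real.tanh (β * m) - m with hFdef
    have hFd : ∀ m : ℝ, HasDerivAt F (β / Real.cosh (β * m) ^ 2 - 1) m := by
      intro m
      have h1 : HasDerivAt (fun y : ℝ => β * y) β m := by
        simpa using (hasDerivAt_id m).const_mul β
      have h2 := (tanh_hasDerivAt (β * m)).comp m h1
      have h3 := h2.sub (hasDerivAt_id m)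
      have e : β / Real.cosh (β * m) ^ 2 - 1 = 1 / Real.cosh (β * m) ^ 2 * β - 1 := by
        ring
      rw [e]
      exact h3
    have hFderiv : deriv F = fun m => β / Real.cosh (β * m) ^ 2 - 1 :=
      funext fun m => (hFd m).deriv
    have hFc : Continuous F :=
      Differentiable.continuous fun m => (hFd m).differentiableAt
    have hF0 : F 0 = 0 := by simp [hFdef]
    -- strict concavity on [0,1]
    have hconc : StrictConcaveOn ℝ (Icc (0 : ℝ) 1) F := by
      apply StrictAntiOn.strictConcaveOn_of_deriv (convex_Icc 0 1) hFc.continuousOn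
      rw [interior_Icc]
      intro x hx y hy hxy
      simp only [hFderiv]
      have hx0 : 0 < x := hx.1
      have hc : Real.cosh (β * x) < Real.cosh (β * y) := by
        apply Real.cosh_strictMonoOn
        · exact mem_Ici.2 (by positivity)
        · exact mem_Ici.2 (by nlinarith [hx.1.trans hxy])
        · nlinarith
      have h1 : 1 ≤ Real.cosh (β * x) := Real.one_le_cosh _
      have hsq : Real.cosh (β * x) ^ 2 < Real.cosh (β * y) ^ 2 := by nlinarith
      have := div_lt_div_of_pos_left hβ0 (by positivity : (0:ℝ) < Real.cosh (β * x) ^ 2) hsq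
      linarith
    -- a point a ∈ (0,1) with F a > 0
    have hd0 : HasDerivAt F (β - 1) 0 := by
      have := hFd 0
      simpa using this
    have hslope : Tendsto (slope F 0) (𝓝[>] (0:ℝ)) (𝓝 (β - 1)) :=
      (hasDerivAt_iff_tendsto_slope.mp hd0).mono_left
        (nhdsWithin_mono _ (fun z hz => ne_of_gt hz))
    have hev : ∀ᶠ a in 𝓝[>] (0:ℝ), 0 < slope F 0 a :=
      hslope.eventually (eventually_gt_nhds (by linarith))
    have hmem : Ioo (0:ℝ) 1 ∈ 𝓝[>] (0:ℝ) := Ioo_mem_nhdsGT_of_mem ⟨le_refl 0, one_pos⟩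
    obtain ⟨a, ha1, ha2⟩ := (hev.and (eventually_of_mem hmem (fun x hx => hx))).exists
    have haF : 0 < F a := by
      have : slope F 0 a = F a / a := by
        simp [slope_def_field, hF0]
      rw [this] at ha1
      have := mul_pos ha1 ha2.1
      rw [div_mul_cancel₀] at this
      · exact this
      · exact ne_of_gt ha2.1
    -- F 1 < 0
    have hF1 : F 1 < 0 := by
      have := tanh_lt_one' (β * 1)
      simp only [hFdef]
      linarith
    -- IVT
    have hsub : Ioo (F 1) (F a) ⊆ F '' Ioo a 1 :=
      intermediate_value_Ioo' (le_of_lt ha2.2) hFc.continuousOn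
    obtain ⟨m, hm, hFm⟩ := hsub ⟨hF1, haF⟩
    have hmIoo : m ∈ Ioo (0:ℝ) 1 := ⟨lt_trans ha2.1 hm.1, hm.2⟩
    -- key uniqueness: at most one positive root
    have key : ∀ p q : ℝ, p ∈ Ioo (0:ℝ) 1 → q ∈ Ioo (0:ℝ) 1 → F p = 0 → F q = 0 →
        p < q → False := by
      intro p q hp hq hFp hFq hpq
      have hq0 : 0 < q := hq.1
      set t := (q - p) / q with ht_def
      have ht : 0 < t := div_pos (by linarith) hq0
      have ht1 : t < 1 := by rw [div_lt_one hq0]; linarith [hp.1]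
      have hcomb := hconc.2 (show (0:ℝ) ∈ Icc (0:ℝ) 1 by constructor <;> norm_num)
        (show q ∈ Icc (0:ℝ) 1 from ⟨hq.1.le, hq.2.le⟩) hq0.ne ht (by linarith)
        (by ring : t + (1 - t) = 1)
      have hpt : t • (0:ℝ) + (1 - t) • q = p := by
        simp only [smul_eq_mul, mul_zero, zero_add, ht_def]
        field_simp
        ring
      rw [hpt, hF0, hFp, hFq] at hcomb
      simp at hcomb
    have hmfix : m = Real.tanh (β * m) := by
      have h := hFm
      simp only [hFdef] at h
      linarith
    refine ⟨m, ⟨hmIoo, hmfix⟩, ?_⟩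
    · intro y ⟨hyIoo, hyfix⟩
      have hFy : F y = 0 := by simp only [hFdef]; linarith [hyfix]
      rcases lt_trichotomy y m with h | h | h
      · exact absurd (key y m hyIoo hmIoo hFy hFm h) (fun h => h)
      · exact h
      · exact absurd (key m y hmIoo hyIoo hFm hFy h) (fun h => h)
  · intro β hβ0 hβ1 m hm hfix
    by_contra hne
    have hmpos : 0 < m := lt_of_le_of_ne hm.1 (Ne.symm hne)
    have h1 : Real.tanh (β * m) < β * m := tanh_lt_self' (by positivity)
    have h2 : β * m ≤ m := by nlinarith
    linarith [hfix ▸ h1]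
end

section
/- For every β>1 there exists c_β>0 such that for all m∈[−1,1], f_β(m)−f_β(m_β) ≥ c_β·min{(m−m_β)², (m+m_β)²}. In particular, ±m_β are the unique global minimizers of f_β on [−1,1]. -/
/-- The entropy `S(m) = -((1+m)/2) ln((1+m)/2) - ((1-m)/2) ln((1-m)/2)`.
Since `Real.log 0 = 0` in Mathlib, this formula automatically extends continuously
by `S(±1) = 0`. -/
noncomputable def entropy (m : ℝ) : ℝ :=
  -((1 + m) / 2 * Real.log ((1 + m) / 2)) - (1 - m) / 2 * Real.log ((1 - m) / 2)

/-- The mean-field free energy `f_β(m) = -m²/2 - S(m)/β`. -/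
noncomputable def meanFieldFreeEnergy (β m : ℝ) : ℝ :=
  -m ^ 2 / 2 - entropy m / β

noncomputable def Afun (m : ℝ) : ℝ :=
  (Real.log ((1 + m) / 2) - Real.log ((1 - m) / 2)) / 2

lemma Afun_tanh (y : ℝ) : Afun (Real.tanh y) = y := by
  have hc : 0 < Real.cosh y := Real.cosh_pos y
  have h1 : (1 + Real.tanh y) / 2 = Real.exp y / (2 * Real.cosh y) := by
    rw [Real.tanh_eq_sinh_div_cosh, ← Real.cosh_add_sinh y]
    field_simp
  have h2 : (1 - Real.tanh y) / 2 = Real.exp (-y) / (2 * Real.cosh y) := by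
    rw [Real.tanh_eq_sinh_div_cosh, ← Real.cosh_sub_sinh y]
    field_simp
  unfold Afun
  rw [h1, h2, Real.log_div (Real.exp_ne_zero _) (by positivity),
    Real.log_div (Real.exp_ne_zero _) (by positivity), Real.log_exp, Real.log_exp]
  ring

lemma hasDerivAt_Afun {m : ℝ} (h1 : -1 < m) (h2 : m < 1) :
    HasDerivAt Afun (1 / (1 - m ^ 2)) m := by
  have hp : (0:ℝ) < 1 + m := by linarith
  have hq : (0:ℝ) < 1 - m := by linarith
  have d1 : HasDerivAt (fun m : ℝ => (1 + m) / 2) (1 / 2) m := by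
    simpa using ((hasDerivAt_id m).const_add (1:ℝ)).div_const 2
  have d2 : HasDerivAt (fun m : ℝ => (1 - m) / 2) (-(1 / 2)) m := by
    have := ((hasDerivAt_id m).const_sub (1:ℝ)).div_const 2
    exact this.congr_deriv (by norm_num)
  have l1 : HasDerivAt (fun m : ℝ => Real.log ((1 + m) / 2)) (1 / (1 + m)) m := by
    have := (Real.hasDerivAt_log (x := (1 + m) / 2) (by positivity)).comp m d1
    refine this.congr_deriv ?_
    field_simp
  have l2 : HasDerivAt (fun m : ℝ => Real.log ((1 - m) / 2)) (-(1 / (1 - m))) m := by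
    have := (Real.hasDerivAt_log (x := (1 - m) / 2) (by positivity)).comp m d2
    refine this.congr_deriv ?_
    field_simp
  have h := (l1.sub l2).div_const 2
  have : HasDerivAt Afun ((1 / (1 + m) - -(1 / (1 - m))) / 2) m := h
  convert this using 1
  have hs : (1 - m^2) = (1+m)*(1-m) := by ring
  rw [hs]
  field_simp
  ring

lemma hasDerivAt_entropy {m : ℝ} (h1 : -1 < m) (h2 : m < 1) :
    HasDerivAt entropy (-Afun m) m := by
  have hp : (0:ℝ) < 1 + m := by linarith
  have hq : (0:ℝ) < 1 - m := by linarith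
  have d1 : HasDerivAt (fun m : ℝ => (1 + m) / 2) (1 / 2) m := by
    simpa using ((hasDerivAt_id m).const_add (1:ℝ)).div_const 2
  have d2 : HasDerivAt (fun m : ℝ => (1 - m) / 2) (-(1 / 2)) m := by
    have := ((hasDerivAt_id m).const_sub (1:ℝ)).div_const 2
    exact this.congr_deriv (by norm_num)
  have e1 : HasDerivAt (fun m : ℝ => (1 + m) / 2 * Real.log ((1 + m) / 2))
      ((Real.log ((1 + m) / 2) + 1) * (1 / 2)) m :=
    by have := (Real.hasDerivAt_mul_log (ne_of_gt (by linarith) : ((1:ℝ) + m)/2 ≠ 0)).comp m d1; exact this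
  have e2 : HasDerivAt (fun m : ℝ => (1 - m) / 2 * Real.log ((1 - m) / 2))
      ((Real.log ((1 - m) / 2) + 1) * (-(1 / 2))) m :=
    by have := (Real.hasDerivAt_mul_log (ne_of_gt (by linarith) : ((1:ℝ) - m)/2 ≠ 0)).comp m d2; exact this
  have h := e1.neg.sub e2
  have : HasDerivAt entropy
      (-((Real.log ((1 + m) / 2) + 1) * (1 / 2)) - (Real.log ((1 - m) / 2) + 1) * (-(1 / 2))) m := h
  convert this using 1
  unfold Afun
  ring

lemma hasDerivAt_f {β m : ℝ} (hβ : 0 < β) (h1 : -1 < m) (h2 : m < 1) :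
    HasDerivAt (meanFieldFreeEnergy β) ((Afun m - β * m) / β) m := by
  have h := (((hasDerivAt_pow 2 m).neg).div_const 2).sub
    ((hasDerivAt_entropy h1 h2).div_const β)
  have : HasDerivAt (meanFieldFreeEnergy β) (-(2 * m ^ 1) / 2 - -Afun m / β) m := h
  convert this using 1
  field_simp
  ring

lemma continuous_f (β : ℝ) : Continuous (meanFieldFreeEnergy β) := by
  have c1 : Continuous (fun m : ℝ => (1 + m) / 2 * Real.log ((1 + m) / 2)) :=
    Real.continuous_mul_log.comp (by continuity)
  have c2 : Continuous (fun m : ℝ => (1 - m) / 2 * Real.log ((1 - m) / 2)) :=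
    Real.continuous_mul_log.comp (by continuity)
  have ce : Continuous entropy := c1.neg.sub c2
  exact ((continuous_pow 2).neg.div_const 2).sub (ce.div_const β)

lemma entropy_even (m : ℝ) : entropy (-m) = entropy m := by
  unfold entropy
  have h1 : (1 + -m) = 1 - m := by ring
  have h2 : (1 - -m) = 1 + m := by ring
  rw [h1, h2]
  ring

lemma f_even (β m : ℝ) : meanFieldFreeEnergy β (-m) = meanFieldFreeEnergy β m := by
  unfold meanFieldFreeEnergy
  rw [entropy_even]
  ring_nf

lemma strictConvex_u {β : ℝ} :
    StrictConvexOn ℝ (Set.Ico (0:ℝ) 1) (fun m => Afun m - β * m) := by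
  have hderiv : ∀ x ∈ Set.Ioo (0:ℝ) 1,
      HasDerivAt (fun m => Afun m - β * m) (1 / (1 - x ^ 2) - β) x := by
    intro x hx
    have hA := hasDerivAt_Afun (by linarith [hx.1]) hx.2
    have hB : HasDerivAt (fun m : ℝ => β * m) β x := by
      simpa using (hasDerivAt_id x).const_mul β
    exact hA.sub hB
  apply StrictMonoOn.strictConvexOn_of_deriv (convex_Ico 0 1)
  · intro x hx
    have hA := hasDerivAt_Afun (by linarith [hx.1] : -1 < x) hx.2
    have hB : HasDerivAt (fun m : ℝ => β * m) β x := by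
      simpa using (hasDerivAt_id x).const_mul β
    exact (hA.sub hB).continuousAt.continuousWithinAt
  · rw [interior_Ico]
    intro a ha b hb hab
    rw [(hderiv a ha).deriv, (hderiv b hb).deriv]
    have h1 : 0 < 1 - b ^ 2 := by nlinarith [hb.1, hb.2]
    have h2 : 1 - b ^ 2 < 1 - a ^ 2 := by nlinarith [ha.1, hb.1]
    have := one_div_lt_one_div_of_lt h1 h2
    linarith

lemma main_half (β mβ : ℝ) (hβ : 1 < β) (hmβ0 : 0 < mβ) (hmβ1 : mβ < 1)
    (hfix : mβ = Real.tanh (β * mβ)) :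
    ∃ c : ℝ, 0 < c ∧ ∀ m ∈ Set.Icc (0:ℝ) 1,
      meanFieldFreeEnergy β m - meanFieldFreeEnergy β mβ ≥ c * (m - mβ) ^ 2 := by
  have hβ0 : (0:ℝ) < β := by linarith
  set u : ℝ → ℝ := fun m => Afun m - β * m with hu
  have huβ : u mβ = 0 := by
    have h := Afun_tanh (β * mβ)
    rw [← hfix] at h
    simp [hu, h]
  have hu0 : u 0 = 0 := by simp [hu, Afun]
  have hsc := strictConvex_u (β := β)
  have hcv := hsc.convexOn
  have hmem0 : (0:ℝ) ∈ Set.Ico (0:ℝ) 1 := by norm_num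
  have hmemβ : mβ ∈ Set.Ico (0:ℝ) 1 := ⟨hmβ0.le, hmβ1⟩
  have hmemh : mβ/2 ∈ Set.Ico (0:ℝ) 1 := ⟨by linarith, by linarith⟩
  set X := u (mβ/2) with hXdef
  have hXneg : X < 0 := by
    have h := hsc.2 hmem0 hmemβ (ne_of_lt hmβ0) (by norm_num : (0:ℝ) < 1/2)
      (by norm_num : (0:ℝ) < 1/2) (by norm_num)
    have h2 : u ((1/2 : ℝ) • (0:ℝ) + (1/2 : ℝ) • mβ) < (1/2 : ℝ) • u 0 + (1/2 : ℝ) • u mβ := h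
    have harg : (1/2 : ℝ) • (0:ℝ) + (1/2 : ℝ) • mβ = mβ/2 := by
      simp [smul_eq_mul]; ring
    rw [harg, hu0, huβ] at h2
    simpa [smul_eq_mul, hXdef] using h2
  set K := -2 * X / mβ with hKdef
  have hKpos : 0 < K := by
    apply div_pos (by linarith) hmβ0
  -- (b)
  have hb : ∀ m ∈ Set.Icc (0:ℝ) mβ, u m ≤ 0 := by
    intro m hm
    have ha : 0 ≤ (mβ - m)/mβ := div_nonneg (by linarith [hm.2]) hmβ0.le
    have hb' : 0 ≤ m/mβ := div_nonneg hm.1 hmβ0.le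
    have hab : (mβ - m)/mβ + m/mβ = 1 := by field_simp; ring
    have h := hcv.2 hmem0 hmemβ ha hb' hab
    have h2 : u (((mβ - m)/mβ) • (0:ℝ) + (m/mβ) • mβ) ≤
        ((mβ - m)/mβ) • u 0 + (m/mβ) • u mβ := h
    have harg : ((mβ - m)/mβ) • (0:ℝ) + (m/mβ) • mβ = m := by
      rw [smul_eq_mul, smul_eq_mul]
      field_simp [hmβ0.ne']
      ring
    rw [harg, hu0, huβ] at h2
    simpa using h2
  -- (c)
  have hc : ∀ m ∈ Set.Icc (mβ/2) mβ, u m ≤ -K * (mβ - m) := by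
    intro m hm
    have ha : 0 ≤ 2*(mβ - m)/mβ := div_nonneg (by linarith [hm.2]) hmβ0.le
    have hb' : 0 ≤ (2*m - mβ)/mβ := div_nonneg (by linarith [hm.1]) hmβ0.le
    have hab : 2*(mβ - m)/mβ + (2*m - mβ)/mβ = 1 := by field_simp; ring
    have h := hcv.2 hmemh hmemβ ha hb' hab
    have h2 : u ((2*(mβ - m)/mβ) • (mβ/2) + ((2*m - mβ)/mβ) • mβ) ≤
        (2*(mβ - m)/mβ) • u (mβ/2) + ((2*m - mβ)/mβ) • u mβ := h
    have harg : (2*(mβ - m)/mβ) • (mβ/2) + ((2*m - mβ)/mβ) • mβ = m := by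
      rw [smul_eq_mul, smul_eq_mul]; field_simp [hmβ0.ne']; ring
    rw [harg, huβ] at h2
    simp only [smul_eq_mul, mul_zero, add_zero] at h2
    have h := h2
    have heq : -K * (mβ - m) = 2*(mβ - m)/mβ * X := by
      rw [hKdef]; field_simp
    rw [heq]
    exact h
  -- (d)
  have hd : ∀ m ∈ Set.Ico mβ 1, K * (m - mβ) ≤ u m := by
    intro m hm
    rcases eq_or_lt_of_le hm.1 with he | hlt
    · rw [← he, huβ]; simp
    · have hD : 0 < m - mβ/2 := by linarith
      have hD2 : m*2 - mβ ≠ 0 := ne_of_gt (by linarith : (0:ℝ) < m*2 - mβ)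
      have ha : 0 ≤ (m - mβ)/(m - mβ/2) := div_nonneg (by linarith) hD.le
      have hb' : 0 ≤ (mβ/2)/(m - mβ/2) := div_nonneg (by linarith) hD.le
      have hab : (m - mβ)/(m - mβ/2) + (mβ/2)/(m - mβ/2) = 1 := by
        field_simp [hD.ne', hD2]
        ring
      have h := hcv.2 hmemh ⟨by linarith, hm.2⟩ ha hb' hab
      have h2 : u (((m - mβ)/(m - mβ/2)) • (mβ/2) + ((mβ/2)/(m - mβ/2)) • m) ≤
          ((m - mβ)/(m - mβ/2)) • u (mβ/2) + ((mβ/2)/(m - mβ/2)) • u m := h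
      have harg : ((m - mβ)/(m - mβ/2)) • (mβ/2) + ((mβ/2)/(m - mβ/2)) • m = mβ := by
        rw [smul_eq_mul, smul_eq_mul]
        field_simp [hD.ne', hD2]
        ring
      rw [harg, huβ] at h2
      simp only [smul_eq_mul] at h2
      rw [← hXdef] at h2
      have h3 : 0 ≤ (m - mβ)/(m - mβ/2) * X + (mβ/2)/(m - mβ/2) * u m := h2
      have key' : 0 ≤ (m - mβ) * X + (mβ/2) * u m := by
        have hnum : (m - mβ) * X + (mβ/2) * u m =
            ((m - mβ)/(m - mβ/2) * X + (mβ/2)/(m - mβ/2) * u m) * (m - mβ/2) := by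
          field_simp [hD.ne', hD2]
        rw [hnum]
        exact mul_nonneg h3 hD.le
      have hKm : K * mβ = -2 * X := by
        rw [hKdef]; field_simp
      have hfin : mβ * (u m - K * (m - mβ)) = 2 * ((m - mβ) * X + mβ/2 * u m) := by
        linear_combination (-(m - mβ)) * hKm
      have h4 : 0 ≤ mβ * (u m - K * (m - mβ)) := by rw [hfin]; linarith
      nlinarith [h4, hmβ0]
  -- monotonicity pieces
  have hfc := continuous_f β
  have hderivf : ∀ x ∈ Set.Ioo (0:ℝ) 1, HasDerivAt (meanFieldFreeEnergy β) (u x / β) x := by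
    intro x hx
    exact hasDerivAt_f hβ0 (by linarith [hx.1]) hx.2
  have P1 : AntitoneOn (meanFieldFreeEnergy β) (Set.Icc 0 mβ) := by
    apply antitoneOn_of_hasDerivWithinAt_nonpos (convex_Icc 0 mβ) hfc.continuousOn
      (f' := fun x => u x / β)
    · intro x hx
      rw [interior_Icc] at hx
      exact (hderivf x ⟨hx.1, lt_trans hx.2 hmβ1⟩).hasDerivWithinAt
    · intro x hx
      rw [interior_Icc] at hx
      rw [div_nonpos_iff]
      exact Or.inr ⟨hb x ⟨hx.1.le, hx.2.le⟩, hβ0.le⟩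
  have hderivG : ∀ x ∈ Set.Ioo mβ 1,
      HasDerivAt (fun m => meanFieldFreeEnergy β m - K*(m - mβ)^2/(2*β))
        ((u x - K*(x - mβ))/β) x := by
    intro x hx
    have h0 : HasDerivAt (fun m : ℝ => m - mβ) 1 x := (hasDerivAt_id x).sub_const mβ
    have hq := ((h0.pow 2).const_mul K).div_const (2*β)
    have hf := hderivf x ⟨lt_trans hmβ0 hx.1, hx.2⟩
    have h := hf.sub hq
    refine h.congr_deriv ?_
    field_simp
    ring
  have P2 : MonotoneOn (fun m => meanFieldFreeEnergy β m - K*(m - mβ)^2/(2*β))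
      (Set.Icc mβ 1) := by
    apply monotoneOn_of_hasDerivWithinAt_nonneg (convex_Icc mβ 1)
      (Continuous.continuousOn (by
        exact hfc.sub ((continuous_const.mul ((continuous_id.sub continuous_const).pow 2)).div_const (2*β))))
      (f' := fun x => (u x - K*(x - mβ))/β)
    · intro x hx
      rw [interior_Icc] at hx
      exact (hderivG x hx).hasDerivWithinAt
    · intro x hx
      rw [interior_Icc] at hx
      exact div_nonneg (sub_nonneg.mpr (hd x ⟨hx.1.le, hx.2⟩)) hβ0.le
  have P2' : ∀ m ∈ Set.Icc mβ 1,
      K*(m - mβ)^2/(2*β) ≤ meanFieldFreeEnergy β m - meanFieldFreeEnergy β mβ := by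
    intro m hm
    have h := P2 (Set.left_mem_Icc.mpr (by linarith)) hm hm.1
    have hz : K*(mβ - mβ)^2/(2*β) = 0 := by simp
    simp only at h
    linarith
  have hderivH : ∀ x ∈ Set.Ioo (mβ/2) mβ,
      HasDerivAt (fun m => meanFieldFreeEnergy β m - K*(mβ - m)^2/(2*β))
        ((u x + K*(mβ - x))/β) x := by
    intro x hx
    have h0 : HasDerivAt (fun m : ℝ => mβ - m) (-1) x := (hasDerivAt_id x).const_sub mβ
    have hq := ((h0.pow 2).const_mul K).div_const (2*β)
    have hf := hderivf x ⟨lt_of_lt_of_le (by linarith [hx.1]) (le_refl x), lt_trans hx.2 hmβ1⟩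
    have h := hf.sub hq
    refine h.congr_deriv ?_
    field_simp
    ring
  have P3 : AntitoneOn (fun m => meanFieldFreeEnergy β m - K*(mβ - m)^2/(2*β))
      (Set.Icc (mβ/2) mβ) := by
    apply antitoneOn_of_hasDerivWithinAt_nonpos (convex_Icc (mβ/2) mβ)
      (Continuous.continuousOn (by
        exact hfc.sub ((continuous_const.mul ((continuous_const.sub continuous_id).pow 2)).div_const (2*β))))
      (f' := fun x => (u x + K*(mβ - x))/β)
    · intro x hx
      rw [interior_Icc] at hx
      exact (hderivH x hx).hasDerivWithinAt
    · intro x hx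
      rw [interior_Icc] at hx
      rw [div_nonpos_iff]
      refine Or.inr ⟨?_, hβ0.le⟩
      have := hc x ⟨hx.1.le, hx.2.le⟩
      linarith
  have P3' : ∀ m ∈ Set.Icc (mβ/2) mβ,
      K*(mβ - m)^2/(2*β) ≤ meanFieldFreeEnergy β m - meanFieldFreeEnergy β mβ := by
    intro m hm
    have h := P3 hm (Set.right_mem_Icc.mpr (by linarith)) hm.2
    have hz : K*(mβ - mβ)^2/(2*β) = 0 := by simp
    simp only at h
    linarith
  -- assembly
  have hc8 : 0 < K/(8*β) := div_pos hKpos (by linarith)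
  have hK38 : 0 ≤ 3*K/(8*β) := le_of_lt (div_pos (by linarith) (by linarith))
  refine ⟨K/(8*β), hc8, ?_⟩
  intro m hm
  rcases le_or_gt m (mβ/2) with h1 | h1
  · have e1 : meanFieldFreeEnergy β (mβ/2) ≤ meanFieldFreeEnergy β m :=
      P1 ⟨hm.1, by linarith⟩ ⟨by linarith, by linarith⟩ h1
    have e2 := P3' (mβ/2) ⟨le_refl _, by linarith⟩
    have e3 : (m - mβ)^2 ≤ mβ^2 := by nlinarith [hm.1]
    have s1 : K/(8*β)*(m - mβ)^2 ≤ K/(8*β)*mβ^2 :=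
      mul_le_mul_of_nonneg_left e3 hc8.le
    have s2 : K/(8*β)*mβ^2 = K*(mβ - mβ/2)^2/(2*β) := by ring
    linarith
  rcases le_or_gt m mβ with h2 | h2
  · have e2 := P3' m ⟨h1.le, h2⟩
    have s2 : K*(mβ - m)^2/(2*β) - K/(8*β)*(m - mβ)^2 = (3*K/(8*β))*(m - mβ)^2 := by ring
    have hpos : 0 ≤ (3*K/(8*β))*(m - mβ)^2 := mul_nonneg hK38 (sq_nonneg _)
    linarith
  · have e2 := P2' m ⟨h2.le, hm.2⟩
    have s2 : K*(m - mβ)^2/(2*β) - K/(8*β)*(m - mβ)^2 = (3*K/(8*β))*(m - mβ)^2 := by ring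
    have hpos : 0 ≤ (3*K/(8*β))*(m - mβ)^2 := mul_nonneg hK38 (sq_nonneg _)
    linarith

/-- **Quadratic lower bound for the mean-field free energy.** For every `β > 1` there is
`c_β > 0` such that `f_β(m) - f_β(m_β) ≥ c_β · min{(m - m_β)², (m + m_β)²}` for all
`m ∈ [-1,1]`; in particular `±m_β` are the unique global minimizers of `f_β` on `[-1,1]`. -/
theorem meanFieldFreeEnergy_lower_bound
    (β mβ : ℝ) (hβ : 1 < β)
    (hmβ : mβ ∈ Set.Ioo (0 : ℝ) 1) (hfix : mβ = Real.tanh (β * mβ)) :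
    (∃ c : ℝ, 0 < c ∧ ∀ m ∈ Set.Icc (-1 : ℝ) 1,
      meanFieldFreeEnergy β m - meanFieldFreeEnergy β mβ ≥
        c * min ((m - mβ) ^ 2) ((m + mβ) ^ 2)) ∧
    (∀ m ∈ Set.Icc (-1 : ℝ) 1,
      meanFieldFreeEnergy β mβ ≤ meanFieldFreeEnergy β m ∧
      (meanFieldFreeEnergy β m = meanFieldFreeEnergy β mβ → m = mβ ∨ m = -mβ)) := by
  obtain ⟨c, hc, hmain⟩ := main_half β mβ hβ hmβ.1 hmβ.2 hfix
  have part1 : ∀ m ∈ Set.Icc (-1:ℝ) 1,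
      meanFieldFreeEnergy β m - meanFieldFreeEnergy β mβ ≥
        c * min ((m - mβ) ^ 2) ((m + mβ) ^ 2) := by
    intro m hm
    rcases le_or_gt 0 m with h0 | h0
    · have h := hmain m ⟨h0, hm.2⟩
      have hle : c * min ((m - mβ) ^ 2) ((m + mβ) ^ 2) ≤ c * (m - mβ) ^ 2 :=
        mul_le_mul_of_nonneg_left (min_le_left _ _) hc.le
      linarith
    · have h := hmain (-m) ⟨by linarith, by linarith [hm.1]⟩
      rw [f_even] at h
      have heq : (-m - mβ) ^ 2 = (m + mβ) ^ 2 := by ring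
      rw [heq] at h
      have hle : c * min ((m - mβ) ^ 2) ((m + mβ) ^ 2) ≤ c * (m + mβ) ^ 2 :=
        mul_le_mul_of_nonneg_left (min_le_right _ _) hc.le
      linarith
  refine ⟨⟨c, hc, part1⟩, ?_⟩
  intro m hm
  have h := part1 m hm
  have hminnn : 0 ≤ min ((m - mβ) ^ 2) ((m + mβ) ^ 2) :=
    le_min (sq_nonneg _) (sq_nonneg _)
  have hmul : 0 ≤ c * min ((m - mβ) ^ 2) ((m + mβ) ^ 2) := mul_nonneg hc.le hminnn
  constructor
  · linarith
  · intro heq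
    have hmin0 : min ((m - mβ) ^ 2) ((m + mβ) ^ 2) = 0 := by
      by_contra hne
      have hpos : 0 < min ((m - mβ) ^ 2) ((m + mβ) ^ 2) :=
        lt_of_le_of_ne hminnn (Ne.symm hne)
      nlinarith
    rcases min_eq_iff.mp hmin0 with ⟨ha, _⟩ | ⟨hb, _⟩
    · left
      have := sq_eq_zero_iff.mp ha
      linarith
    · right
      have := sq_eq_zero_iff.mp hb
      linarith
end
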